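/- Let n ≥ 3 and let P be a set of n points in the plane in strictly convex position. Then every intersecting family of triangles spanned by P has size at most F(n) = C(⌈(n+2)/2⌉, 3) + C(⌊(n+2)/2⌋, 3). -/

import Mathlib

/-- A finite set of points in the plane is in strictly convex position if no three of its
points are collinear and every point of it is an extreme point of its convex hull. -/
def StrictConvexPos (P : Finset (ℝ × ℝ)) : Prop :=
  (∀ a ∈ P, ∀ b ∈ P, ∀ c ∈ P, a ≠ b → a ≠ c → b ≠ c →
      ¬ Collinear ℝ ({a, b, c} : Set (ℝ × ℝ))) ∧
  ∀ p ∈ P, p ∈ Set.extremePoints ℝ (convexHull ℝ (P : Set (ℝ × ℝ)))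

/-- `F n = C(⌈(n+2)/2⌉, 3) + C(⌊(n+2)/2⌋, 3)`. -/
def F (n : ℕ) : ℕ := Nat.choose ((n + 3) / 2) 3 + Nat.choose ((n + 2) / 2) 3

namespace MIFCP


def det2 (v w : ℝ × ℝ) : ℝ := v.1 * w.2 - v.2 * w.1
def dot2 (v w : ℝ × ℝ) : ℝ := v.1 * w.1 + v.2 * w.2
def rot2 (v : ℝ × ℝ) : ℝ × ℝ := (-v.2, v.1)

lemma dot2_rot2 (v w : ℝ × ℝ) : dot2 (rot2 v) w = det2 v w := by
  simp [dot2, rot2, det2]; ring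

lemma key_id (u v w : ℝ × ℝ) :
    dot2 u v * dot2 (rot2 u) w - dot2 (rot2 u) v * dot2 u w = dot2 u u * det2 v w := by
  simp [dot2, rot2, det2]; ring

lemma det2_cyc (x y z : ℝ × ℝ) : det2 (z - y) (x - y) = det2 (y - x) (z - x) := by
  simp [det2]; ring

lemma dot2_sub (u v w : ℝ × ℝ) : dot2 u (v - w) = dot2 u v - dot2 u w := by
  simp [dot2]; ring

lemma prod_ne_zero_iff {v : ℝ × ℝ} : v ≠ 0 ↔ (v.1 ≠ 0 ∨ v.2 ≠ 0) := by
  constructor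
  · intro h
    by_contra hh; push_neg at hh
    exact h (Prod.ext hh.1 hh.2)
  · intro h hv
    rcases h with h | h <;> rw [hv] at h <;> simp at h

lemma rot2_ne_zero {v : ℝ × ℝ} (hv : v ≠ 0) : rot2 v ≠ 0 := by
  rw [prod_ne_zero_iff] at hv ⊢
  simp only [rot2]
  rcases hv with h | h
  · right; simpa using h
  · left; simpa using h

lemma dot2_pos_self {u : ℝ × ℝ} (hu : u ≠ 0) : 0 < dot2 u u := by
  rw [prod_ne_zero_iff] at hu
  unfold dot2
  have h1 : 0 ≤ u.1 * u.1 := mul_self_nonneg _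
  have h2 : 0 ≤ u.2 * u.2 := mul_self_nonneg _
  rcases hu with h | h
  · nlinarith [mul_self_pos.2 h]
  · nlinarith [mul_self_pos.2 h]

lemma exists_smul_of_det2_zero {v w : ℝ × ℝ} (hv : v ≠ 0) (h : det2 v w = 0) :
    ∃ r : ℝ, w = r • v := by
  rw [prod_ne_zero_iff] at hv
  unfold det2 at h
  rcases hv with h1 | h1
  · refine ⟨w.1 / v.1, ?_⟩
    apply Prod.ext
    · simp; field_simp
    · simp
      field_simp
      nlinarith [h]
  · refine ⟨w.2 / v.2, ?_⟩
    apply Prod.ext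
    · simp
      field_simp
      nlinarith [h]
    · simp; field_simp

/-- If `det2 (b-a) (c-a) = 0` then `a, b, c` are collinear. -/
lemma collinear_of_det2 {a b c : ℝ × ℝ} (h : det2 (b - a) (c - a) = 0) :
    Collinear ℝ ({a, b, c} : Set (ℝ × ℝ)) := by
  rw [collinear_iff_of_mem (Set.mem_insert a {b, c})]
  rcases eq_or_ne (b - a) 0 with hb | hb
  · refine ⟨c - a, fun p hp => ?_⟩
    rcases hp with hp | hp | hp
    · exact ⟨0, by simp [hp]⟩
    · refine ⟨0, ?_⟩
      have : b = a := by
        have := sub_eq_zero.mp hb; exact this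
      simp [hp, this]
    · refine ⟨1, ?_⟩
      simp only [Set.mem_singleton_iff] at hp
      rw [hp, vadd_eq_add, one_smul]
      abel
  · obtain ⟨r, hr⟩ := exists_smul_of_det2_zero hb h
    refine ⟨b - a, fun p hp => ?_⟩
    rcases hp with hp | hp | hp
    · exact ⟨0, by simp [hp]⟩
    · refine ⟨1, ?_⟩
      rw [hp, vadd_eq_add, one_smul]
      abel
    · refine ⟨r, ?_⟩
      simp only [Set.mem_singleton_iff] at hp
      rw [hp, vadd_eq_add, ← hr]
      abel







lemma isLinearMap_dot2 (c : ℝ × ℝ) : IsLinearMap ℝ (dot2 c) := by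
  constructor
  · intro v w; simp [dot2]; ring
  · intro t v; simp [dot2]; ring

lemma hull_dot2 {c : ℝ × ℝ} {r : ℝ} {S : Set (ℝ × ℝ)} (h : ∀ w ∈ S, r ≤ dot2 c w) :
    ∀ w ∈ convexHull ℝ S, r ≤ dot2 c w := by
  intro w hw
  exact convexHull_min h (convex_halfSpace_ge (isLinearMap_dot2 c) r) hw

lemma interior_pos {c : ℝ × ℝ} (hc : c ≠ 0) {A : Set (ℝ × ℝ)} {r : ℝ}
    (hA : ∀ w ∈ A, r ≤ dot2 c w) {p : ℝ × ℝ} (hp : p ∈ interior A) : r < dot2 c p := by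
  rw [mem_interior_iff_mem_nhds, Metric.mem_nhds_iff] at hp
  obtain ⟨ε, hε, hball⟩ := hp
  have hcn : 0 < ‖c‖ := norm_pos_iff.2 hc
  set δ : ℝ := ε / (2 * ‖c‖) with hδ
  have hδpos : 0 < δ := by positivity
  have hq : p - δ • c ∈ A := by
    apply hball
    rw [Metric.mem_ball, dist_eq_norm]
    have : p - δ • c - p = -(δ • c) := by abel
    rw [this, norm_neg, norm_smul]
    rw [Real.norm_of_nonneg hδpos.le, hδ]
    rw [div_mul_eq_mul_div]
    rw [div_lt_iff₀ (by positivity)]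
    nlinarith
  have h1 : r ≤ dot2 c (p - δ • c) := hA _ hq
  have h2 : dot2 c (p - δ • c) = dot2 c p - δ * dot2 c c := by
    simp [dot2]; ring
  have h3 : 0 < δ * dot2 c c := mul_pos hδpos (dot2_pos_self hc)
  linarith

lemma interior_hull_pos {c : ℝ × ℝ} (hc : c ≠ 0) {S : Set (ℝ × ℝ)} {r : ℝ}
    (h : ∀ w ∈ S, r ≤ dot2 c w) {p : ℝ × ℝ} (hp : p ∈ interior (convexHull ℝ S)) :
    r < dot2 c p :=
  interior_pos hc (hull_dot2 h) hp





lemma aux2 (N : ℕ) : ((N.choose 2 : ℤ)) * 2 = N * ((N : ℤ) - 1) := by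
  induction N with
  | zero => simp
  | succ k ih =>
    have h : (k+1).choose 2 = k.choose 1 + k.choose 2 := Nat.choose_succ_succ k 1
    rw [h]
    push_cast [Nat.choose_one_right]
    push_cast at ih
    ring_nf
    ring_nf at ih
    linarith

lemma aux3 (N : ℕ) : ((N.choose 3 : ℤ)) * 6 = N * ((N : ℤ) - 1) * ((N : ℤ) - 2) := by
  induction N with
  | zero => simp
  | succ k ih =>
    have h : (k+1).choose 3 = k.choose 2 + k.choose 3 := Nat.choose_succ_succ k 2
    have h2 := aux2 k
    rw [h]
    push_cast
    push_cast at ih h2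
    ring_nf
    ring_nf at ih h2
    linarith

lemma int_sq_ge (t : ℤ) : 0 ≤ t * (t - 1) := by
  rcases le_or_gt 1 t with h | h
  · exact mul_nonneg (by linarith) (by linarith)
  · have h0 : t ≤ 0 := by omega
    have := mul_nonneg (neg_nonneg.2 h0) (by linarith : (0:ℤ) ≤ 1 - t)
    nlinarith

lemma count_bound {α : Type*} (V : Finset α) (n : ℕ) (hn : 3 ≤ n) (hV : V.card = n)
    (d : α → ℕ) (hsum : ∑ v ∈ V, d v * 2 = n * (n - 1)) :
    n.choose 3 ≤ F n + ∑ v ∈ V, (d v).choose 2 := by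
  rw [← Nat.cast_le (α := ℤ)]
  push_cast
  have hn1 : 1 ≤ n := by omega
  rw [← Finset.sum_mul] at hsum
  have hsumZ : (∑ v ∈ V, (d v : ℤ)) * 2 = (n : ℤ) * ((n : ℤ) - 1) := by
    have h2 : ((∑ v ∈ V, d v : ℕ) : ℤ) * 2 = ((n * (n-1) : ℕ) : ℤ) := by
      exact_mod_cast congrArg (Nat.cast : ℕ → ℤ) hsum
    push_cast [Nat.cast_sub hn1] at h2
    convert h2 using 2
  set S : ℤ := ∑ v ∈ V, (d v : ℤ) with hS
  rcases Nat.even_or_odd n with ⟨m, hm⟩ | ⟨m, hm⟩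
  · -- even case
    have hnm : (n : ℤ) = 2 * m := by rw [hm]; push_cast; ring
    set k : ℤ := (m : ℤ) - 1 with hk
    have per : ∀ v ∈ V, 2 * k * (d v : ℤ) - k * k - k ≤ ((d v).choose 2 : ℤ) * 2 := by
      intro v _
      rw [aux2]
      nlinarith [int_sq_ge ((d v : ℤ) - k)]
    have hsum2 : ∑ v ∈ V, (2 * k * (d v : ℤ) - k * k - k) ≤ ∑ v ∈ V, ((d v).choose 2 : ℤ) * 2 :=
      Finset.sum_le_sum per
    have hlhs : ∑ v ∈ V, (2 * k * (d v : ℤ) - k * k - k) = 2 * k * S - n * (k * k + k) := by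
      rw [Finset.sum_sub_distrib, Finset.sum_sub_distrib, ← Finset.mul_sum]
      simp [Finset.sum_const, hV]
      ring
    have hrhs : ∑ v ∈ V, ((d v).choose 2 : ℤ) * 2 = (∑ v ∈ V, ((d v).choose 2 : ℤ)) * 2 := by
      rw [Finset.sum_mul]
    have hF : (F n : ℤ) * 6 = 2 * ((m:ℤ)+1) * m * ((m:ℤ)-1) := by
      have e1 : (n + 3) / 2 = m + 1 := by omega
      have e2 : (n + 2) / 2 = m + 1 := by omega
      unfold F
      rw [e1, e2]
      push_cast
      have h1 := aux3 (m+1)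
      push_cast at h1
      linarith
    have hC : ((n.choose 3 : ℤ)) * 6 = (2*(m:ℤ)) * (2*(m:ℤ) - 1) * (2*(m:ℤ) - 2) := by
      rw [aux3 n, hnm]
    have hSv : S = 2 * (m:ℤ) * m - m := by
      rw [hnm] at hsumZ; linarith [hsumZ]
    have h6 : (2*k*S - (n:ℤ)*(k*k+k)) * 3 ≤ (∑ v ∈ V, ((d v).choose 2 : ℤ)) * 6 := by
      rw [hrhs] at hsum2; rw [hlhs] at hsum2; linarith
    rw [hk, hSv, hnm] at h6
    nlinarith [h6, hF, hC]
  · -- odd case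
    have hnm : (n : ℤ) = 2 * m + 1 := by rw [hm]; push_cast; ring
    set k : ℤ := (m : ℤ) with hk
    have per : ∀ v ∈ V, 2 * k * (d v : ℤ) - k * k - k ≤ ((d v).choose 2 : ℤ) * 2 := by
      intro v _
      rw [aux2]
      nlinarith [int_sq_ge ((d v : ℤ) - k)]
    have hsum2 : ∑ v ∈ V, (2 * k * (d v : ℤ) - k * k - k) ≤ ∑ v ∈ V, ((d v).choose 2 : ℤ) * 2 :=
      Finset.sum_le_sum per
    have hlhs : ∑ v ∈ V, (2 * k * (d v : ℤ) - k * k - k) = 2 * k * S - n * (k * k + k) := by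
      rw [Finset.sum_sub_distrib, Finset.sum_sub_distrib, ← Finset.mul_sum]
      simp [Finset.sum_const, hV]
      ring
    have hrhs : ∑ v ∈ V, ((d v).choose 2 : ℤ) * 2 = (∑ v ∈ V, ((d v).choose 2 : ℤ)) * 2 := by
      rw [Finset.sum_mul]
    have hF : (F n : ℤ) * 6 = ((m:ℤ)+2) * ((m:ℤ)+1) * m + ((m:ℤ)+1) * m * ((m:ℤ)-1) := by
      have e1 : (n + 3) / 2 = m + 2 := by omega
      have e2 : (n + 2) / 2 = m + 1 := by omega
      unfold F
      rw [e1, e2]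
      push_cast
      have h1 := aux3 (m+2)
      have h2 := aux3 (m+1)
      push_cast at h1 h2
      linarith
    have hC : ((n.choose 3 : ℤ)) * 6 = (2*(m:ℤ)+1) * (2*(m:ℤ)) * (2*(m:ℤ) - 1) := by
      rw [aux3 n, hnm]; ring
    have hSv : S = (2 * (m:ℤ) + 1) * m := by
      rw [hnm] at hsumZ; linarith [hsumZ]
    have h6 : (2*k*S - (n:ℤ)*(k*k+k)) * 3 ≤ (∑ v ∈ V, ((d v).choose 2 : ℤ)) * 6 := by
      rw [hrhs] at hsum2; rw [hlhs] at hsum2; linarith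
    rw [hk, hSv, hnm] at h6
    nlinarith [h6, hF, hC]







/-- In a tournament on `V`, any family of 3-element subsets that all induce 3-cycles
has size at most `F V.card`. -/
lemma tournament_bound {α : Type*} [DecidableEq α] (V : Finset α) (hn : 3 ≤ V.card)
    (o : α → α → Prop)
    (htot : ∀ a ∈ V, ∀ b ∈ V, a ≠ b → (o a b ↔ ¬ o b a))
    (𝓕 : Finset (Finset α)) (h1 : ∀ T ∈ 𝓕, T ⊆ V ∧ T.card = 3)
    (h2 : ∀ T ∈ 𝓕, ∃ a b c, a ≠ b ∧ a ≠ c ∧ b ≠ c ∧ T = {a, b, c} ∧ o a b ∧ o b c ∧ o c a) :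
    𝓕.card ≤ F V.card := by
  classical
  set n := V.card with hn'
  set CycP : Finset α → Prop :=
    fun T => ∃ a b c, a ≠ b ∧ a ≠ c ∧ b ≠ c ∧ T = {a, b, c} ∧ o a b ∧ o b c ∧ o c a with hCycP
  set Cyc : Finset (Finset α) := (V.powersetCard 3).filter CycP with hCyc
  set NC : Finset (Finset α) := (V.powersetCard 3).filter (fun T => ¬ CycP T) with hNC
  set d : α → ℕ := fun v => ((V.erase v).filter (fun w => o v w)).card with hd
  -- step 1 : 𝓕 ⊆ Cyc
  have step1 : 𝓕 ⊆ Cyc := by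
    intro T hT
    rw [hCyc, Finset.mem_filter, Finset.mem_powersetCard]
    exact ⟨⟨(h1 T hT).1, (h1 T hT).2⟩, h2 T hT⟩
  -- step 2
  have step2 : Cyc.card + NC.card = n.choose 3 := by
    rw [hCyc, hNC, Finset.card_filter_add_card_filter_not, Finset.card_powersetCard, hn']
  -- the sigma set of (source, dominated pair)
  set Sig : Finset ((_ : α) × Finset α) :=
    V.sigma (fun v => ((V.erase v).filter (fun w => o v w)).powersetCard 2) with hSig
  have hSigCard : Sig.card = ∑ v ∈ V, (d v).choose 2 := by
    rw [hSig, Finset.card_sigma]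
    refine Finset.sum_congr rfl (fun v _ => ?_)
    rw [Finset.card_powersetCard]
  -- step 3 : NC.card = Sig.card
  have step3 : Sig.card = NC.card := by
    apply Finset.card_bij (fun a _ => insert a.1 a.2)
    · -- maps into NC
      rintro ⟨v, pr⟩ ha
      rw [hSig, Finset.mem_sigma, Finset.mem_powersetCard] at ha
      obtain ⟨hv, hpr, hprcard⟩ := ha
      have hvnotin : v ∉ pr := fun hc => (Finset.mem_erase.1 (Finset.mem_filter.1 (hpr hc)).1).1 rfl
      have hdom : ∀ w ∈ pr, w ∈ V ∧ w ≠ v ∧ o v w := by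
        intro w hw
        have := Finset.mem_filter.1 (hpr hw)
        exact ⟨Finset.mem_erase.1 this.1 |>.2, Finset.mem_erase.1 this.1 |>.1, this.2⟩
      rw [hNC, Finset.mem_filter, Finset.mem_powersetCard]
      refine ⟨⟨?_, ?_⟩, ?_⟩
      · intro x hx
        rcases Finset.mem_insert.1 hx with rfl | hx
        · exact hv
        · exact (hdom x hx).1
      · rw [Finset.card_insert_of_notMem hvnotin, hprcard]
      · -- not cyclic
        rintro ⟨a, b, c, hab, hac, hbc, hTeq, hoab, hobc, hoca⟩
        -- v is one of a, b, c; its cyclic in-neighbor is in pr, contradiction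
        have hvmem : v ∈ ({a, b, c} : Finset α) := hTeq ▸ Finset.mem_insert_self v pr
        have habc : ∀ x, x ∈ ({a, b, c} : Finset α) → x = a ∨ x = b ∨ x = c := by
          intro x hx; simpa using hx
        -- find w with w ≠ v, w ∈ {a,b,c}, o w v
        have hfind : ∃ w, w ∈ ({a, b, c} : Finset α) ∧ w ≠ v ∧ o w v := by
          rcases habc v hvmem with rfl | rfl | rfl
          · exact ⟨c, by simp, fun h => hac h.symm, hoca⟩
          · exact ⟨a, by simp, hab, hoab⟩
          · exact ⟨b, by simp, hbc, hobc⟩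
        obtain ⟨w, hwmem, hwv, howv⟩ := hfind
        have hwpr : w ∈ pr := by
          have : w ∈ insert v pr := hTeq ▸ hwmem
          rcases Finset.mem_insert.1 this with rfl | h
          · exact absurd rfl hwv
          · exact h
        have hovw : o v w := (hdom w hwpr).2.2
        have hwV : w ∈ V := (hdom w hwpr).1
        exact ((htot v hv w hwV (Ne.symm hwv)).1 hovw) howv
    · -- injective
      rintro ⟨v, pr⟩ ha ⟨v', pr'⟩ ha' heq
      rw [hSig, Finset.mem_sigma, Finset.mem_powersetCard] at ha ha'
      obtain ⟨hv, hpr, hprcard⟩ := ha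
      obtain ⟨hv', hpr', hprcard'⟩ := ha'
      have hvnotin : v ∉ pr := fun hc => (Finset.mem_erase.1 (Finset.mem_filter.1 (hpr hc)).1).1 rfl
      have hvnotin' : v' ∉ pr' :=
        fun hc => (Finset.mem_erase.1 (Finset.mem_filter.1 (hpr' hc)).1).1 rfl
      by_cases hvv : v = v'
      · subst hvv
        have : pr = pr' := by
          have h1 : insert v pr = insert v pr' := heq
          have := congrArg (fun s => Finset.erase s v) h1
          simpa [Finset.erase_insert, hvnotin, hvnotin'] using this
        simp [this]
      · exfalso
        have hvin : v ∈ insert v' pr' := heq ▸ Finset.mem_insert_self v pr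
        have hv'in : v' ∈ insert v pr := heq ▸ Finset.mem_insert_self v' pr'
        have hvpr' : v ∈ pr' := by
          rcases Finset.mem_insert.1 hvin with h | h
          · exact absurd h hvv
          · exact h
        have hv'pr : v' ∈ pr := by
          rcases Finset.mem_insert.1 hv'in with h | h
          · exact absurd h.symm hvv
          · exact h
        have h1 : o v' v := (Finset.mem_filter.1 (hpr' hvpr')).2
        have h2 : o v v' := (Finset.mem_filter.1 (hpr hv'pr)).2
        exact (htot v hv v' hv' hvv).1 h2 h1
    · -- surjective
      intro S hS
      rw [hNC, Finset.mem_filter, Finset.mem_powersetCard] at hS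
      obtain ⟨⟨hSsub, hScard⟩, hSnc⟩ := hS
      obtain ⟨a, b, c, hab, hac, hbc, hSeq⟩ := Finset.card_eq_three.1 hScard
      have haV : a ∈ V := hSsub (hSeq ▸ by simp)
      have hbV : b ∈ V := hSsub (hSeq ▸ by simp)
      have hcV : c ∈ V := hSsub (hSeq ▸ by simp)
      -- helper to build a sigma element
      have key : ∀ s t₁ t₂ : α, s ∈ V → t₁ ∈ V → t₂ ∈ V → t₁ ≠ s → t₂ ≠ s → t₁ ≠ t₂ →
          o s t₁ → o s t₂ →
          (⟨s, ({t₁, t₂} : Finset α)⟩ : (_ : α) × Finset α) ∈ Sig := by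
        intro s t₁ t₂ hs ht₁ ht₂ h₁s h₂s h₁₂ ho₁ ho₂
        rw [hSig, Finset.mem_sigma, Finset.mem_powersetCard]
        refine ⟨hs, ?_, Finset.card_pair h₁₂⟩
        intro x hx
        rcases Finset.mem_insert.1 hx with rfl | hx
        · exact Finset.mem_filter.2 ⟨Finset.mem_erase.2 ⟨h₁s, ht₁⟩, ho₁⟩
        · rw [Finset.mem_singleton] at hx
          subst hx
          exact Finset.mem_filter.2 ⟨Finset.mem_erase.2 ⟨h₂s, ht₂⟩, ho₂⟩
      have flip : ∀ x y : α, x ∈ V → y ∈ V → x ≠ y → ¬ o x y → o y x := by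
        intro x y hx hy hxy h
        exact (htot y hy x hx (Ne.symm hxy)).2 h
      by_cases pab : o a b <;> by_cases pbc : o b c <;> by_cases pca : o c a
      · exact absurd ⟨a, b, c, hab, hac, hbc, hSeq, pab, pbc, pca⟩ hSnc
      · -- o a b, o b c, ¬ o c a → o a c : source a
        have hoac : o a c := flip c a hcV haV (fun h => hac h.symm) pca
        refine ⟨⟨a, {b, c}⟩, key a b c haV hbV hcV (Ne.symm hab) (Ne.symm hac) hbc pab hoac, ?_⟩
        rw [hSeq]
      · -- o a b, ¬ o b c, o c a → o c b : source c
        have hocb : o c b := flip b c hbV hcV hbc pbc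
        refine ⟨⟨c, {a, b}⟩, key c a b hcV haV hbV hac hbc hab pca hocb, ?_⟩
        rw [hSeq]
        ext x; simp only [Finset.mem_insert, Finset.mem_singleton]; tauto
      · -- o a b, ¬ o b c, ¬ o c a → o c b, o a c : source a
        have hoac : o a c := flip c a hcV haV (fun h => hac h.symm) pca
        refine ⟨⟨a, {b, c}⟩, key a b c haV hbV hcV (Ne.symm hab) (Ne.symm hac) hbc pab hoac, ?_⟩
        rw [hSeq]
      · -- ¬ o a b, o b c, o c a → o b a : source b
        have hoba : o b a := flip a b haV hbV hab pab
        refine ⟨⟨b, {a, c}⟩, key b a c hbV haV hcV hab (Ne.symm hbc) hac hoba pbc, ?_⟩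
        rw [hSeq]
        ext x; simp only [Finset.mem_insert, Finset.mem_singleton]; tauto
      · -- ¬ o a b, o b c, ¬ o c a : source b
        have hoba : o b a := flip a b haV hbV hab pab
        refine ⟨⟨b, {a, c}⟩, key b a c hbV haV hcV hab (Ne.symm hbc) hac hoba pbc, ?_⟩
        rw [hSeq]
        ext x; simp only [Finset.mem_insert, Finset.mem_singleton]; tauto
      · -- ¬ o a b, ¬ o b c, o c a : source c
        have hocb : o c b := flip b c hbV hcV hbc pbc
        refine ⟨⟨c, {a, b}⟩, key c a b hcV haV hbV hac hbc hab pca hocb, ?_⟩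
        rw [hSeq]
        ext x; simp only [Finset.mem_insert, Finset.mem_singleton]; tauto
      · -- ¬ o a b, ¬ o b c, ¬ o c a : cycle a → c → b → a
        exfalso
        have hoba : o b a := flip a b haV hbV hab pab
        have hocb : o c b := flip b c hbV hcV hbc pbc
        have hoac : o a c := flip c a hcV haV (fun h => hac h.symm) pca
        refine hSnc ⟨a, c, b, hac, hab, fun h => hbc h.symm, ?_, hoac, hocb, hoba⟩
        rw [hSeq]
        ext x; simp only [Finset.mem_insert, Finset.mem_singleton]; tauto
  -- step 4 : degree sum
  have step4 : ∑ v ∈ V, d v * 2 = n * (n - 1) := by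
    have hsplit : ∀ v ∈ V, d v + ((V.erase v).filter (fun w => o w v)).card = n - 1 := by
      intro v hv
      rw [hd]
      have hcongr : (V.erase v).filter (fun w => o w v) =
          (V.erase v).filter (fun w => ¬ o v w) := by
        apply Finset.filter_congr
        intro w hw
        have hwV : w ∈ V := Finset.mem_of_mem_erase hw
        have hwv : w ≠ v := Finset.ne_of_mem_erase hw
        exact (htot w hwV v hv hwv)
      rw [hcongr, Finset.card_filter_add_card_filter_not, Finset.card_erase_of_mem hv,
        hn']
    have hswap : ∑ v ∈ V, ((V.erase v).filter (fun w => o w v)).card = ∑ v ∈ V, d v := by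
      have lhs_eq : ∀ v, ((V.erase v).filter (fun w => o w v)).card
          = ∑ w ∈ V, (if w ≠ v ∧ o w v then 1 else 0) := by
        intro v
        rw [Finset.card_filter]
        rw [← Finset.sum_erase (s := V) (a := v)
          (f := fun w => if w ≠ v ∧ o w v then 1 else 0) (by simp)]
        refine Finset.sum_congr rfl (fun w hw => ?_)
        have hwv : w ≠ v := Finset.ne_of_mem_erase hw
        simp [hwv]
      have rhs_eq : ∀ v, d v = ∑ w ∈ V, (if w ≠ v ∧ o v w then 1 else 0) := by
        intro v
        show (Finset.filter (fun w => o v w) (V.erase v)).card = _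
        rw [Finset.card_filter]
        rw [← Finset.sum_erase (s := V) (a := v)
          (f := fun w => if w ≠ v ∧ o v w then 1 else 0) (by simp)]
        refine Finset.sum_congr rfl (fun w hw => ?_)
        have hwv : w ≠ v := Finset.ne_of_mem_erase hw
        simp [hwv]
      calc ∑ v ∈ V, ((V.erase v).filter (fun w => o w v)).card
          = ∑ v ∈ V, ∑ w ∈ V, (if w ≠ v ∧ o w v then 1 else 0) := by
            exact Finset.sum_congr rfl (fun v _ => lhs_eq v)
        _ = ∑ w ∈ V, ∑ v ∈ V, (if w ≠ v ∧ o w v then 1 else 0) := Finset.sum_comm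
        _ = ∑ v ∈ V, ∑ w ∈ V, (if v ≠ w ∧ o v w then 1 else 0) := rfl
        _ = ∑ v ∈ V, ∑ w ∈ V, (if w ≠ v ∧ o v w then 1 else 0) := by
            refine Finset.sum_congr rfl (fun v _ => Finset.sum_congr rfl (fun w _ => ?_))
            congr 1
            simp only [eq_iff_iff]
            constructor
            · rintro ⟨h1, h2⟩; exact ⟨h1.symm, h2⟩
            · rintro ⟨h1, h2⟩; exact ⟨h1.symm, h2⟩
        _ = ∑ v ∈ V, d v := by
            exact Finset.sum_congr rfl (fun v _ => (rhs_eq v).symm)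
    have : ∑ v ∈ V, (d v + ((V.erase v).filter (fun w => o w v)).card) = ∑ v ∈ V, (n - 1) :=
      Finset.sum_congr rfl hsplit
    rw [Finset.sum_add_distrib, hswap, Finset.sum_const, smul_eq_mul, ← hn'] at this
    rw [← Finset.sum_mul]
    omega
  -- assemble
  have hcount := count_bound V n (hn' ▸ hn) hn'.symm d step4
  have hF1 : 𝓕.card ≤ Cyc.card := Finset.card_le_card step1
  have h5 : NC.card = ∑ v ∈ V, (d v).choose 2 := by rw [← step3, hSigCard]
  linarith [hcount, step2, h5, hF1]

lemma interior_pos_base {c : ℝ × ℝ} (hc : c ≠ 0) {S : Set (ℝ × ℝ)} {x : ℝ × ℝ}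
    (hgen : ∀ w ∈ S, 0 ≤ dot2 c (w - x)) {p : ℝ × ℝ}
    (hp : p ∈ interior (convexHull ℝ S)) : 0 < dot2 c (p - x) := by
  have hgen' : ∀ w ∈ S, dot2 c x ≤ dot2 c w := by
    intro w hw
    have := hgen w hw
    rw [dot2_sub] at this
    linarith
  have := interior_hull_pos hc hgen' hp
  rw [dot2_sub]
  linarith

lemma det2_self (v : ℝ × ℝ) : det2 v v = 0 := by simp [det2]; ring
lemma det2_zero_right (v : ℝ × ℝ) : det2 v 0 = 0 := by simp [det2]

lemma det2_aux1 (x y z : ℝ × ℝ) : det2 (x - z) (y - x) = det2 (y - x) (z - x) := by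
  simp [det2]; ring

lemma det2_aux2 (x z p : ℝ × ℝ) : det2 (p - x) (z - x) = det2 (x - z) (p - x) := by
  simp [det2]; ring

lemma det2_neg_self (x z : ℝ × ℝ) : det2 (x - z) (z - x) = 0 := by simp [det2]; ring


end MIFCP


open MIFCP in
theorem max_intersecting_family_convex_position (n : ℕ) (hn : 3 ≤ n)
    (P : Finset (ℝ × ℝ)) (hP : P.card = n) (hconv : StrictConvexPos P)
    (𝓕 : Finset (Finset (ℝ × ℝ)))
    (h𝓕 : ∀ T ∈ 𝓕, T ⊆ P ∧ T.card = 3)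
    (hint : ∀ T₁ ∈ 𝓕, ∀ T₂ ∈ 𝓕,
      (interior (convexHull ℝ (T₁ : Set (ℝ × ℝ))) ∩
        interior (convexHull ℝ (T₂ : Set (ℝ × ℝ)))).Nonempty) :
    𝓕.card ≤ F n := by
  classical
  -- Step A : supporting functionals at each point of P
  have hsep : ∀ x : ℝ × ℝ, ∃ u : ℝ × ℝ, x ∈ P → ∀ y ∈ P, y ≠ x → 0 < dot2 u (y - x) := by
    intro x
    by_cases hx : x ∈ P
    swap
    · exact ⟨0, fun h => absurd h hx⟩
    have hxe : x ∈ Set.extremePoints ℝ (convexHull ℝ (P : Set (ℝ × ℝ))) := hconv.2 x hx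
    have hnot : x ∉ convexHull ℝ ((P : Set (ℝ × ℝ)) \ {x}) := by
      intro hmem
      have hsub : convexHull ℝ ((P : Set (ℝ × ℝ)) \ {x}) ⊆ convexHull ℝ (P : Set (ℝ × ℝ)) :=
        convexHull_mono Set.diff_subset
      have hxe' : x ∈ Set.extremePoints ℝ (convexHull ℝ ((P : Set (ℝ × ℝ)) \ {x})) := by
        rw [mem_extremePoints] at hxe ⊢
        exact ⟨hmem, fun y hy z hz hseg => hxe.2 y (hsub hy) z (hsub hz) hseg⟩
      have hfin := extremePoints_convexHull_subset hxe'
      simp at hfin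
    have hclosed : IsClosed (convexHull ℝ ((P : Set (ℝ × ℝ)) \ {x})) :=
      ((P.finite_toSet.sdiff (t := {x})).isCompact_convexHull ℝ).isClosed
    obtain ⟨f, s, hfx, hfb⟩ :=
      geometric_hahn_banach_point_closed (convex_convexHull ℝ _) hclosed hnot
    refine ⟨(f (1, 0), f (0, 1)), fun _ y hy hyx => ?_⟩
    have hfw : ∀ w : ℝ × ℝ, f w = dot2 (f (1, 0), f (0, 1)) w := by
      intro w
      have hw : w = w.1 • ((1 : ℝ), (0 : ℝ)) + w.2 • ((0 : ℝ), (1 : ℝ)) := by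
        apply Prod.ext <;> simp
      have := congrArg f hw
      rw [map_add, map_smul, map_smul] at this
      simp only [smul_eq_mul] at this
      rw [this]
      simp [dot2]
      ring
    have hyP : y ∈ convexHull ℝ ((P : Set (ℝ × ℝ)) \ {x}) :=
      subset_convexHull ℝ _ ⟨hy, hyx⟩
    have h1 : s < f y := hfb y hyP
    have h2 : f (y - x) = f y - f x := map_sub f y x
    rw [← hfw]
    linarith
  choose u hu using hsep
  -- u x is nonzero for x ∈ P
  have hune : ∀ x ∈ P, u x ≠ 0 := by
    intro x hx h0
    have hcard : 1 < P.card := by omega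
    obtain ⟨y, hy, hyx⟩ := Finset.exists_mem_ne hcard x
    have := hu x hx y hy hyx
    rw [h0] at this
    simp [dot2] at this
  -- the ratio function
  set ρ : ℝ × ℝ → ℝ × ℝ → ℝ :=
    fun x w => dot2 (rot2 (u x)) (w - x) / dot2 (u x) (w - x) with hρ
  have ratio_lt : ∀ x ∈ P, ∀ v w : ℝ × ℝ, 0 < dot2 (u x) (v - x) → 0 < dot2 (u x) (w - x) →
      0 < det2 (v - x) (w - x) → ρ x v < ρ x w := by
    intro x hx v w hv hw hdet
    show dot2 (rot2 (u x)) (v - x) / dot2 (u x) (v - x)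
        < dot2 (rot2 (u x)) (w - x) / dot2 (u x) (w - x)
    rw [div_lt_div_iff₀ hv hw]
    have hid := key_id (u x) (v - x) (w - x)
    have hupos := dot2_pos_self (hune x hx)
    nlinarith [mul_pos hupos hdet]
  -- labelling of triangles with designated vertex
  have lbl : ∀ T ∈ 𝓕, ∀ x ∈ T, ∃ y z : ℝ × ℝ, y ∈ P ∧ z ∈ P ∧ y ≠ x ∧ z ≠ x ∧ y ≠ z ∧
      T = {x, y, z} ∧ 0 < det2 (y - x) (z - x) := by
    intro T hT x hxT
    obtain ⟨hTP, hT3⟩ := h𝓕 T hT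
    have hxP : x ∈ P := hTP hxT
    obtain ⟨a, b, c, hab, hac, hbc, hTeq⟩ := Finset.card_eq_three.1 hT3
    have haP : a ∈ P := hTP (hTeq ▸ (by simp : a ∈ ({a, b, c} : Finset (ℝ × ℝ))))
    have hbP : b ∈ P := hTP (hTeq ▸ (by simp : b ∈ ({a, b, c} : Finset (ℝ × ℝ))))
    have hcP : c ∈ P := hTP (hTeq ▸ (by simp : c ∈ ({a, b, c} : Finset (ℝ × ℝ))))
    -- helper: given the two other vertices p q, build the conclusion
    have build : ∀ p q : ℝ × ℝ, p ∈ P → q ∈ P → p ≠ x → q ≠ x → p ≠ q →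
        T = {x, p, q} → ∃ y z : ℝ × ℝ, y ∈ P ∧ z ∈ P ∧ y ≠ x ∧ z ≠ x ∧ y ≠ z ∧
        T = {x, y, z} ∧ 0 < det2 (y - x) (z - x) := by
      intro p q hpP hqP hpx hqx hpq hTpq
      have hncol : ¬ Collinear ℝ ({x, p, q} : Set (ℝ × ℝ)) :=
        hconv.1 x hxP p hpP q hqP (Ne.symm hpx) (Ne.symm hqx) hpq
      have hdne : det2 (p - x) (q - x) ≠ 0 := fun h => hncol (collinear_of_det2 h)
      rcases lt_or_gt_of_ne hdne with hneg | hpos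
      · refine ⟨q, p, hqP, hpP, hqx, hpx, Ne.symm hpq, ?_, ?_⟩
        · rw [hTpq]; ext w; simp only [Finset.mem_insert, Finset.mem_singleton]; tauto
        · have : det2 (q - x) (p - x) = - det2 (p - x) (q - x) := by simp [det2]; ring
          rw [this]; linarith
      · exact ⟨p, q, hpP, hqP, hpx, hqx, hpq, hTpq, hpos⟩
    have hxmem : x = a ∨ x = b ∨ x = c := by
      have : x ∈ ({a, b, c} : Finset (ℝ × ℝ)) := hTeq ▸ hxT
      simpa using this
    rcases hxmem with rfl | rfl | rfl
    · exact build b c hbP hcP (fun h => hab h.symm) (fun h => hac h.symm) hbc hTeq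
    · refine build a c haP hcP hab (fun h => hbc h.symm) hac ?_
      rw [hTeq]; ext w; simp only [Finset.mem_insert, Finset.mem_singleton]; tauto
    · refine build a b haP hbP hac hbc hab ?_
      rw [hTeq]; ext w; simp only [Finset.mem_insert, Finset.mem_singleton]; tauto
  -- bigρ and threshold
  set bigρ : ℝ × ℝ → Finset (ℝ × ℝ) → ℝ :=
    fun x T => sSup (ρ x '' ((T.erase x : Finset (ℝ × ℝ)) : Set (ℝ × ℝ))) with hbigρ
  set tt : ℝ × ℝ → ℝ :=
    fun x => sInf (bigρ x '' {T : Finset (ℝ × ℝ) | T ∈ 𝓕 ∧ x ∈ T}) with htt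
  have hbig_eq : ∀ (x y z : ℝ × ℝ) (T : Finset (ℝ × ℝ)), T = {x, y, z} → y ≠ x → z ≠ x →
      ρ x y < ρ x z → bigρ x T = ρ x z := by
    intro x y z T hTeq hyx hzx hlt
    have herase : T.erase x = {y, z} := by
      rw [hTeq]
      rw [Finset.erase_insert]
      simp only [Finset.mem_insert, Finset.mem_singleton]
      push_neg
      exact ⟨fun h => hyx h.symm, fun h => hzx h.symm⟩
    show sSup (ρ x '' ((T.erase x : Finset (ℝ × ℝ)) : Set (ℝ × ℝ))) = ρ x z
    rw [herase]
    have : ((({y, z} : Finset (ℝ × ℝ))) : Set (ℝ × ℝ)) = {y, z} := by simp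
    rw [this, Set.image_pair, csSup_pair]
    exact sup_eq_right.2 hlt.le
  -- finiteness facts for the threshold
  have hSfin : ∀ x : ℝ × ℝ, (bigρ x '' {T : Finset (ℝ × ℝ) | T ∈ 𝓕 ∧ x ∈ T}).Finite :=
    fun x => (𝓕.finite_toSet.subset (fun T hT => hT.1)).image _
  -- the straddle lemma
  have straddle : ∀ T ∈ 𝓕, ∀ x y z : ℝ × ℝ, x ∈ P → y ∈ P → z ∈ P → T = {x, y, z} →
      y ≠ x → z ≠ x → y ≠ z → 0 < det2 (y - x) (z - x) →
      (ρ x y < tt x ∧ ¬ (ρ x z < tt x)) := by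
    intro T hT x y z hxP hyP hzP hTeq hyx hzx hyz hdet
    have hxT : x ∈ T := hTeq ▸ (by simp)
    have hcoeT : ((T : Finset (ℝ × ℝ)) : Set (ℝ × ℝ)) = {x, y, z} := by
      rw [hTeq]; simp
    -- f-positivity of points of P relative to x
    have hfy : 0 < dot2 (u x) (y - x) := hu x hxP y hyP hyx
    have hfz : 0 < dot2 (u x) (z - x) := hu x hxP z hzP hzx
    -- interior points of triangles of the family containing x have positive f-coordinate
    have hfp : ∀ p : ℝ × ℝ, p ∈ interior (convexHull ℝ ((T : Finset (ℝ × ℝ)) : Set (ℝ × ℝ))) →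
        0 < dot2 (u x) (p - x) := by
      intro p hp
      refine interior_pos_base (hune x hxP) ?_ hp
      intro w hw
      rw [hcoeT] at hw
      rcases hw with rfl | rfl | rfl
      · simp [dot2]
      · exact (hu x hxP w hyP hyx).le
      · exact (hu x hxP w hzP hzx).le
    -- det positivity for interior points : det2 (y-x) (p-x) > 0
    have hdet1 : ∀ p : ℝ × ℝ, p ∈ interior (convexHull ℝ ((T : Finset (ℝ × ℝ)) : Set (ℝ × ℝ))) →
        0 < det2 (y - x) (p - x) := by
      intro p hp
      have hc : rot2 (y - x) ≠ 0 := rot2_ne_zero (sub_ne_zero.2 hyx)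
      have := interior_pos_base (x := x) hc (S := ((T : Finset (ℝ × ℝ)) : Set (ℝ × ℝ))) ?_ hp
      · rw [dot2_rot2] at this; exact this
      · intro w hw
        rw [hcoeT] at hw
        rw [dot2_rot2]
        rcases hw with rfl | rfl | rfl
        · simp [sub_self, det2_zero_right]
        · simp [det2_self]
        · exact hdet.le
    -- part 2 : tt x ≤ ρ x z
    have hρyz : ρ x y < ρ x z := ratio_lt x hxP y z hfy hfz hdet
    have hbigT : bigρ x T = ρ x z := hbig_eq x y z T hTeq hyx hzx hρyz
    have hmemT : bigρ x T ∈ bigρ x '' {T' : Finset (ℝ × ℝ) | T' ∈ 𝓕 ∧ x ∈ T'} :=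
      ⟨T, ⟨hT, hxT⟩, rfl⟩
    have htle : tt x ≤ ρ x z := by
      rw [← hbigT]
      exact csInf_le (hSfin x).bddBelow hmemT
    refine ⟨?_, fun h => absurd htle (not_le.2 h)⟩
    -- part 1 : ρ x y < tt x
    have hne : (bigρ x '' {T' : Finset (ℝ × ℝ) | T' ∈ 𝓕 ∧ x ∈ T'}).Nonempty :=
      ⟨bigρ x T, hmemT⟩
    obtain ⟨T', ⟨hT', hxT'⟩, hTt⟩ := hne.csInf_mem (hSfin x)
    obtain ⟨y', z', hy'P, hz'P, hy'x, hz'x, hy'z', hT'eq, hdet'⟩ := lbl T' hT' x hxT'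
    have hcoeT' : ((T' : Finset (ℝ × ℝ)) : Set (ℝ × ℝ)) = {x, y', z'} := by
      rw [hT'eq]; simp
    obtain ⟨p, hpT, hpT'⟩ := hint T hT T' hT'
    -- ρ x y < ρ x p
    have hfp' : 0 < dot2 (u x) (p - x) := hfp p hpT
    have h1 : ρ x y < ρ x p := ratio_lt x hxP y p hfy hfp' (hdet1 p hpT)
    -- ρ x p < ρ x z'
    have hfz' : 0 < dot2 (u x) (z' - x) := hu x hxP z' hz'P hz'x
    have hdet2' : 0 < det2 (p - x) (z' - x) := by
      have hc : rot2 (x - z') ≠ 0 :=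
        rot2_ne_zero (sub_ne_zero.2 (fun h => hz'x h.symm))
      have := interior_pos_base (x := x) hc (S := ((T' : Finset (ℝ × ℝ)) : Set (ℝ × ℝ))) ?_ hpT'
      · rw [dot2_rot2] at this
        rw [det2_aux2]
        exact this
      · intro w hw
        rw [hcoeT'] at hw
        rw [dot2_rot2]
        rcases hw with rfl | rfl | rfl
        · simp [sub_self, det2_zero_right]
        · rw [det2_aux1]
          exact hdet'.le
        · simp [det2_neg_self]
    have h2 : ρ x p < ρ x z' := ratio_lt x hxP p z' hfp' hfz' hdet2'
    -- ρ x z' = bigρ x T' = tt x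
    have hρ' : ρ x y' < ρ x z' :=
      ratio_lt x hxP y' z' (hu x hxP y' hy'P hy'x) hfz' hdet'
    have hbig' : bigρ x T' = ρ x z' := hbig_eq x y' z' T' hT'eq hy'x hz'x hρ'
    have httx : tt x = bigρ x T' := hTt.symm
    rw [httx, hbig']
    linarith
  -- the tournament
  set I : ℝ × ℝ → ℝ × ℝ → Prop := fun a b => ρ a b < tt a with hI
  set lex : ℝ × ℝ → ℝ × ℝ → Prop := fun a b => a.1 < b.1 ∨ (a.1 = b.1 ∧ a.2 < b.2) with hlexd
  set o : ℝ × ℝ → ℝ × ℝ → Prop :=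
    fun a b => (I a b ∧ ¬ I b a) ∨ ((I a b ↔ I b a) ∧ lex a b) with ho
  have hlex : ∀ a b : ℝ × ℝ, a ≠ b → (lex a b ↔ ¬ lex b a) := by
    intro a b hab
    show (a.1 < b.1 ∨ (a.1 = b.1 ∧ a.2 < b.2)) ↔ ¬ (b.1 < a.1 ∨ (b.1 = a.1 ∧ b.2 < a.2))
    push_neg
    constructor
    · rintro (h | ⟨h1, h2⟩)
      · exact ⟨le_of_lt h, fun he => absurd he.symm (ne_of_lt h)⟩
      · exact ⟨le_of_eq h1, fun _ => h2.le⟩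
    · rintro ⟨h1, h2⟩
      rcases lt_or_eq_of_le h1 with h | h
      · exact Or.inl h
      · refine Or.inr ⟨h, ?_⟩
        rcases lt_trichotomy a.2 b.2 with hh | hh | hh
        · exact hh
        · exact absurd (Prod.ext h hh) hab
        · exact absurd hh (not_lt.2 (h2 h.symm))
  have htot : ∀ a ∈ P, ∀ b ∈ P, a ≠ b → (o a b ↔ ¬ o b a) := by
    intro a _ b _ hab
    have hl := hlex a b hab
    show ((I a b ∧ ¬ I b a) ∨ ((I a b ↔ I b a) ∧ lex a b)) ↔
      ¬ ((I b a ∧ ¬ I a b) ∨ ((I b a ↔ I a b) ∧ lex b a))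
    by_cases h1 : I a b <;> by_cases h2 : I b a <;> simp [h1, h2] <;> tauto
  have hcyc : ∀ T ∈ 𝓕, ∃ a b c : ℝ × ℝ, a ≠ b ∧ a ≠ c ∧ b ≠ c ∧ T = {a, b, c} ∧
      o a b ∧ o b c ∧ o c a := by
    intro T hT
    obtain ⟨hTP, hT3⟩ := h𝓕 T hT
    have hTne : T.Nonempty := Finset.card_pos.1 (by omega)
    obtain ⟨x, hxT⟩ := hTne
    obtain ⟨y, z, hyP, hzP, hyx, hzx, hyz, hTeq, hdet⟩ := lbl T hT x hxT
    have hxP : x ∈ P := hTP hxT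
    -- straddle at x
    have S1 := straddle T hT x y z hxP hyP hzP hTeq hyx hzx hyz hdet
    -- straddle at y
    have hTeq2 : T = {y, z, x} := by
      rw [hTeq]; ext w; simp only [Finset.mem_insert, Finset.mem_singleton]; tauto
    have hdet2 : 0 < det2 (z - y) (x - y) := by rw [det2_cyc]; exact hdet
    have S2 := straddle T hT y z x hyP hzP hxP hTeq2 (Ne.symm hyz) (fun h => hyx h.symm)
      hzx hdet2
    -- straddle at z
    have hTeq3 : T = {z, x, y} := by
      rw [hTeq]; ext w; simp only [Finset.mem_insert, Finset.mem_singleton]; tauto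
    have hdet3 : 0 < det2 (x - z) (y - z) := by rw [det2_cyc, det2_cyc]; exact hdet
    have S3 := straddle T hT z x y hzP hxP hyP hTeq3 (fun h => hzx h.symm) hyz
      (fun h => hyx h.symm) hdet3
    refine ⟨x, y, z, Ne.symm hyx, Ne.symm hzx, hyz, hTeq, ?_, ?_, ?_⟩
    · exact Or.inl ⟨S1.1, S2.2⟩
    · exact Or.inl ⟨S2.1, S3.2⟩
    · exact Or.inl ⟨S3.1, S1.2⟩
  have hfinal := tournament_bound P (by rw [hP]; exact hn) o htot 𝓕 h𝓕 hcyc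
  rw [hP] at hfinal
  exact hfinal
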